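/- The function G(d) = (log d)/(log log(d + e^{e^{4n}})) defined on (0,∞) satisfies the coercivity condition (B2): G(d) − d·G'(d) → ∞ as d → ∞. -/

import Mathlib

open Filter Real

private lemma aux_div_log : Tendsto (fun u : ℝ => u / Real.log u) atTop atTop := by
  have h0 : Tendsto (fun u : ℝ => Real.log u / u) atTop (nhds 0) := by
    simpa using Real.tendsto_pow_log_div_mul_add_atTop 1 0 1 one_ne_zero
  have h1 : Tendsto (fun u : ℝ => Real.log u / u) atTop (nhdsWithin 0 (Set.Ioi 0)) := by
    apply tendsto_nhdsWithin_of_tendsto_nhds_of_eventually_within _ h0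
    filter_upwards [eventually_gt_atTop (3 : ℝ)] with u hu
    have hlog : 0 < Real.log u := Real.log_pos (by linarith)
    exact div_pos hlog (by linarith)
  have h2 := tendsto_inv_nhdsGT_zero.comp h1
  refine h2.congr' ?_
  filter_upwards [eventually_gt_atTop (3 : ℝ)] with u hu
  simp [Function.comp, inv_div]

private lemma aux_sub_div_log : Tendsto (fun u : ℝ => (u - 1) / (2 * Real.log u)) atTop atTop := by
  have hV : Tendsto (fun u : ℝ => u / Real.log u / 2 - 1) atTop atTop :=
    tendsto_atTop_add_const_right _ (-1) (aux_div_log.atTop_div_const two_pos)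
  apply tendsto_atTop_mono' atTop _ hV
  filter_upwards [eventually_gt_atTop (3 : ℝ)] with u hu
  have hlog : 1 ≤ Real.log u := by
    rw [show (1:ℝ) = Real.log (Real.exp 1) by simp]
    exact Real.log_le_log (Real.exp_pos 1) (le_trans (Real.exp_one_lt_d9.le.trans (by norm_num)) hu.le)
  have hlogpos : 0 < Real.log u := by linarith
  have key : (u - 1) / (2 * Real.log u) = u / Real.log u / 2 - 1 / (2 * Real.log u) := by
    field_simp
  rw [key]
  have : 1 / (2 * Real.log u) ≤ 1 := by
    rw [div_le_one (by linarith)]; linarith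
  linarith

/-- `G(d) = log d / log log (d + e^{e^{4n}})` satisfies the coercivity condition (B2). -/
theorem stmt_4 (n : ℕ) (hn : 2 ≤ n)
    (G : ℝ → ℝ)
    (hGdef : ∀ d : ℝ, 0 < d →
      G d = Real.log d / Real.log (Real.log (d + Real.exp (Real.exp (4 * (n:ℝ)))))) :
    Tendsto (fun d : ℝ => G d - d * deriv G d) atTop atTop := by
  set c : ℝ := Real.exp (Real.exp (4 * (n:ℝ))) with hc
  have hc1 : 1 < c := by
    rw [hc]
    have : (0:ℝ) < Real.exp (4 * (n:ℝ)) := Real.exp_pos _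
    calc (1:ℝ) = Real.exp 0 := by simp
    _ < _ := Real.exp_lt_exp.mpr this
  -- the target tendsto
  have hT : Tendsto (fun d : ℝ => (Real.log d - 1) / (2 * Real.log (Real.log d))) atTop atTop := by
    have := aux_sub_div_log.comp Real.tendsto_log_atTop
    exact this
  apply tendsto_atTop_mono' atTop _ hT
  -- eventual lower bound
  have hev : ∀ᶠ d : ℝ in atTop, max c (Real.exp (Real.exp 2)) ≤ d := eventually_ge_atTop _
  filter_upwards [hev] with d hd
  have hdc : c ≤ d := le_trans (le_max_left _ _) hd
  have hdee : Real.exp (Real.exp 2) ≤ d := le_trans (le_max_right _ _) hd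
  have hd1 : 1 < d := lt_of_lt_of_le hc1 hdc
  have hd0 : 0 < d := by linarith
  have hdcpos : 0 < d + c := by linarith
  -- log d ≥ e^2 ≥ 2
  have hlogd : Real.exp 2 ≤ Real.log d := by
    have := Real.log_le_log (Real.exp_pos _) hdee
    simpa using this
  have he2 : (2:ℝ) ≤ Real.exp 2 := by
    have := Real.add_one_le_exp (2:ℝ); linarith
  have hlogd2 : 2 ≤ Real.log d := le_trans he2 hlogd
  -- log log d ≥ 2
  have hd4 : 4 ≤ d := by
    have h3 : (3:ℝ) ≤ Real.exp 2 := by have := Real.add_one_le_exp (2:ℝ); linarith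
    have h4 : (4:ℝ) ≤ Real.exp 3 := by have := Real.add_one_le_exp (3:ℝ); linarith
    have : Real.exp 3 ≤ Real.exp (Real.exp 2) := Real.exp_le_exp.mpr h3
    linarith
  have hloglogd : 2 ≤ Real.log (Real.log d) := by
    have := Real.log_le_log (Real.exp_pos _) hlogd
    simpa using this
  -- log (d + c) bounds
  have hlogdc_lb : Real.log d ≤ Real.log (d + c) := Real.log_le_log hd0 (by linarith)
  have hlogdcpos : 0 < Real.log (d + c) := by linarith
  have hlogdc_ne : Real.log (d + c) ≠ 0 := ne_of_gt hlogdcpos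
  have hlogdc_ub : Real.log (d + c) ≤ 2 * Real.log d := by
    have h1 : d + c ≤ d * d := by nlinarith [hd4, hdc]
    calc Real.log (d + c) ≤ Real.log (d * d) := Real.log_le_log hdcpos h1
    _ = 2 * Real.log d := by rw [Real.log_mul (ne_of_gt hd0) (ne_of_gt hd0)]; ring
  set L : ℝ := Real.log (Real.log (d + c)) with hL
  have hL_lb : Real.log (Real.log d) ≤ L := Real.log_le_log (by linarith) hlogdc_lb
  have hLpos : 0 < L := by linarith
  have hLne : L ≠ 0 := ne_of_gt hLpos
  have hL_ub : L ≤ 2 * Real.log (Real.log d) := by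
    calc L ≤ Real.log (2 * Real.log d) := Real.log_le_log hlogdcpos hlogdc_ub
    _ = Real.log 2 + Real.log (Real.log d) := Real.log_mul two_ne_zero (by linarith)
    _ ≤ 2 * Real.log (Real.log d) := by
        have h2 : Real.log 2 ≤ 1 := by
          have := Real.log_le_sub_one_of_pos (x := 2) two_pos; linarith
        linarith
  -- derivative computation
  have hA : HasDerivAt (fun x : ℝ => Real.log x) d⁻¹ d := Real.hasDerivAt_log (ne_of_gt hd0)
  have hB : HasDerivAt (fun x : ℝ => x + c) 1 d := (hasDerivAt_id d).add_const c
  have hC : HasDerivAt (fun x : ℝ => Real.log (x + c)) ((d + c)⁻¹ * 1) d :=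
    by have := (Real.hasDerivAt_log (ne_of_gt hdcpos)).comp d hB; exact this
  have hD : HasDerivAt (fun x : ℝ => Real.log (Real.log (x + c)))
      ((Real.log (d + c))⁻¹ * ((d + c)⁻¹ * 1)) d :=
    by have := (Real.hasDerivAt_log hlogdc_ne).comp d hC; exact this
  have hE : HasDerivAt (fun x : ℝ => Real.log x / Real.log (Real.log (x + c)))
      ((d⁻¹ * L - Real.log d * ((Real.log (d + c))⁻¹ * ((d + c)⁻¹ * 1))) / L ^ 2) d :=
    hA.div hD hLne
  have hGev : G =ᶠ[nhds d] fun x : ℝ => Real.log x / Real.log (Real.log (x + c)) := by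
    filter_upwards [Ioi_mem_nhds hd0] with x hx
    exact hGdef x hx
  have hderiv : deriv G d =
      (d⁻¹ * L - Real.log d * ((Real.log (d + c))⁻¹ * ((d + c)⁻¹ * 1))) / L ^ 2 := by
    rw [hGev.deriv_eq, hE.deriv]
  have hGd : G d = Real.log d / L := hGdef d hd0
  rw [hGd, hderiv]
  -- algebraic lower bound
  have hkey : Real.log d / L -
      d * ((d⁻¹ * L - Real.log d * ((Real.log (d + c))⁻¹ * ((d + c)⁻¹ * 1))) / L ^ 2)
      - (Real.log d - 1) / L
      = d * Real.log d / ((d + c) * Real.log (d + c) * L ^ 2) := by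
    field_simp
    ring
  have hpos3 : 0 ≤ d * Real.log d / ((d + c) * Real.log (d + c) * L ^ 2) := by
    apply div_nonneg
    · positivity
    · positivity
  have hstep1 : (Real.log d - 1) / L ≤ Real.log d / L -
      d * ((d⁻¹ * L - Real.log d * ((Real.log (d + c))⁻¹ * ((d + c)⁻¹ * 1))) / L ^ 2) := by
    nlinarith [hkey, hpos3]
  refine le_trans ?_ hstep1
  -- (log d - 1)/(2 log log d) ≤ (log d - 1)/L
  apply div_le_div_of_nonneg_left (by linarith) hLpos
  · exact hL_ub
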